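/- Let L > 0, C₀ > 0, and let (λ_n)_{n ≥ 1} be complex numbers with |λ_n − (2nπ/L + i (ln 3)/L)| ≤ C₀/n for all n ≥ 1. Define φ_n, φ̃_n ∈ L²(0,L) by φ_n(x) := e^{iλ_n x} and φ̃_n(x) := e^{−iλ_n x}. Then there exists a constant C > 0 such that for all integers 1 ≤ n < m: |⟨φ_n, φ_m⟩| + |⟨φ̃_n, φ̃_m⟩| ≤ C/(m − n) and |⟨φ_n, φ̃_m⟩| + |⟨φ̃_n, φ_m⟩| ≤ C/(m + n), where ⟨f, g⟩ := ∫₀^L f(x) conj(g(x)) dx. -/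

import Mathlib

open Complex Real

lemma exp_int_bound1 (L : ℝ) (hL : 0 ≤ L) (c : ℂ) (M : ℝ) (hre : |c.re| ≤ M) :
    ‖∫ x in (0:ℝ)..L, Complex.exp (c * x)‖ ≤ L * Real.exp (M * L) := by
  have hM : 0 ≤ M := le_trans (abs_nonneg _) hre
  have h := intervalIntegral.norm_integral_le_of_norm_le_const (a := (0:ℝ)) (b := L)
    (C := Real.exp (M * L)) (f := fun x => Complex.exp (c * x)) ?_
  · calc ‖∫ x in (0:ℝ)..L, Complex.exp (c * x)‖ ≤ Real.exp (M*L) * |L - 0| := h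
    _ = L * Real.exp (M*L) := by rw [sub_zero, _root_.abs_of_nonneg hL]; ring
  · intro x hx
    rw [Set.uIoc_of_le hL] at hx
    simp only [Complex.norm_exp]
    apply Real.exp_le_exp.2
    have hx0 : 0 < x := hx.1
    have hxL : x ≤ L := hx.2
    have : (c * x).re = c.re * x := by simp [Complex.mul_re]
    rw [this]
    calc c.re * x ≤ |c.re| * x := mul_le_mul_of_nonneg_right (le_abs_self _) hx0.le
    _ ≤ M * L := mul_le_mul hre hxL hx0.le hM

lemma exp_int_bound2 (L : ℝ) (hL : 0 ≤ L) (c : ℂ) (hc : c ≠ 0) (M : ℝ) (hre : |c.re| ≤ M) :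
    ‖∫ x in (0:ℝ)..L, Complex.exp (c * x)‖ ≤ (Real.exp (M * L) + 1) / ‖c‖ := by
  have hM : 0 ≤ M := le_trans (abs_nonneg _) hre
  rw [integral_exp_mul_complex hc, norm_div]
  gcongr
  calc ‖Complex.exp (c * L) - Complex.exp (c * 0)‖
      ≤ ‖Complex.exp (c * L)‖ + ‖Complex.exp (c * 0)‖ :=
        by simpa using norm_sub_le (Complex.exp (c * L)) (Complex.exp (c * 0))
    _ ≤ Real.exp (M * L) + 1 := by
        rw [mul_zero, Complex.exp_zero, norm_one, Complex.norm_exp]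
        have h1 : (c * L).re = c.re * L := by simp [Complex.mul_re]
        rw [h1]
        have : c.re * L ≤ M * L := by
          calc c.re * L ≤ |c.re| * L := mul_le_mul_of_nonneg_right (le_abs_self _) hL
          _ ≤ M * L := mul_le_mul_of_nonneg_right hre hL
        simp [Real.exp_le_exp, this]

lemma exp_int_combo (L a B M E : ℝ) (hL : 0 < L) (ha : 0 < a) (hB : 0 ≤ B)
    (hE : Real.exp (M * L) ≤ E) (c : ℂ) (hre : |c.re| ≤ M) (k : ℝ) (hk : 1 ≤ k)
    (hck : a * k - B ≤ ‖c‖) :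
    ‖∫ x in (0:ℝ)..L, Complex.exp (c * x)‖ ≤
      (max (2 * (E + 1) / a) (2 * L * E * B / a)) / k := by
  have hk0 : 0 < k := lt_of_lt_of_le one_pos hk
  have hE0 : 0 < E := lt_of_lt_of_le (Real.exp_pos _) hE
  by_cases hcase : 2 * B ≤ a * k
  · -- |c| ≥ a k / 2 > 0
    have hcabs : a * k / 2 ≤ ‖c‖ := by linarith
    have hcpos : (0:ℝ) < ‖c‖ := lt_of_lt_of_le (by positivity) hcabs
    have hc : c ≠ 0 := by
      intro h; rw [h, norm_zero] at hcpos; exact lt_irrefl _ hcpos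
    calc ‖∫ x in (0:ℝ)..L, Complex.exp (c * x)‖
        ≤ (Real.exp (M * L) + 1) / ‖c‖ := exp_int_bound2 L hL.le c hc M hre
      _ ≤ (E + 1) / (a * k / 2) := by
          apply div_le_div₀ (by positivity) (by linarith) (by positivity) hcabs
      _ = (2 * (E + 1) / a) / k := by field_simp
      _ ≤ (max (2 * (E + 1) / a) (2 * L * E * B / a)) / k := by
          gcongr; exact le_max_left _ _
  · push_neg at hcase
    calc ‖∫ x in (0:ℝ)..L, Complex.exp (c * x)‖
        ≤ L * Real.exp (M * L) := exp_int_bound1 L hL.le c M hre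
      _ ≤ L * E := by nlinarith
      _ ≤ (2 * L * E * B / a) / k := by
          rw [le_div_iff₀ hk0, le_div_iff₀ ha]
          nlinarith [mul_pos hL hE0]
      _ ≤ (max (2 * (E + 1) / a) (2 * L * E * B / a)) / k := by
          gcongr; exact le_max_right _ _

set_option maxHeartbeats 1000000 in
theorem gram_estimates (L : ℝ) (hL : 0 < L) (C₀ : ℝ) (hC₀ : 0 < C₀) (lam : ℕ → ℂ)
    (hlam : ∀ n : ℕ, 1 ≤ n →
      ‖lam n - (2 * (n : ℂ) * (Real.pi : ℂ) / (L : ℂ) +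
        Complex.I * (Real.log 3 : ℂ) / (L : ℂ))‖ ≤ C₀ / n) :
    ∃ C > (0:ℝ), ∀ n m : ℕ, 1 ≤ n → n < m →
      (‖∫ x in (0:ℝ)..L,
          Complex.exp (Complex.I * lam n * x) *
            (starRingEnd ℂ) (Complex.exp (Complex.I * lam m * x))‖ +
        ‖∫ x in (0:ℝ)..L,
          Complex.exp (-(Complex.I) * lam n * x) *
            (starRingEnd ℂ) (Complex.exp (-(Complex.I) * lam m * x))‖ ≤
        C / ((m : ℝ) - n)) ∧
      (‖∫ x in (0:ℝ)..L,
          Complex.exp (Complex.I * lam n * x) *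
            (starRingEnd ℂ) (Complex.exp (-(Complex.I) * lam m * x))‖ +
        ‖∫ x in (0:ℝ)..L,
          Complex.exp (-(Complex.I) * lam n * x) *
            (starRingEnd ℂ) (Complex.exp (Complex.I * lam m * x))‖ ≤
        C / ((m : ℝ) + n)) := by
  set z : ℕ → ℂ := fun k => 2 * (k : ℂ) * (Real.pi : ℂ) / (L : ℂ) +
      Complex.I * (Real.log 3 : ℂ) / (L : ℂ) with hz
  have hδ : ∀ k : ℕ, 1 ≤ k → ‖lam k - z k‖ ≤ C₀ := by
    intro k hk
    refine (hlam k hk).trans (div_le_self hC₀.le ?_)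
    exact_mod_cast hk
  have hlog3 : (0:ℝ) ≤ Real.log 3 := Real.log_nonneg (by norm_num)
  set a : ℝ := 2 * Real.pi / L with ha_def
  have ha : 0 < a := by positivity
  set M : ℝ := 2 * Real.log 3 / L + 2 * C₀ with hM_def
  have hM : 0 ≤ M := by positivity
  set E : ℝ := Real.exp (M * L) with hE_def
  have hE0 : 0 < E := Real.exp_pos _
  set C₁ : ℝ := max (2 * (E + 1) / a) (2 * L * E * (2 * C₀) / a) with hC₁_def
  have hC₁ : 0 < C₁ := lt_of_lt_of_le (by positivity) (le_max_left _ _)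
  refine ⟨2 * C₁ + 1, by positivity, ?_⟩
  intro n m hn hnm
  have hnR : (1:ℝ) ≤ (n:ℝ) := by exact_mod_cast hn
  have hmn : (1:ℝ) ≤ (m:ℝ) - (n:ℝ) := by
    have : (n:ℝ) + 1 ≤ (m:ℝ) := by exact_mod_cast hnm
    linarith
  have hmp : (1:ℝ) ≤ (m:ℝ) + (n:ℝ) := by linarith
  have hm : 1 ≤ m := le_trans hn hnm.le
  -- explicit forms
  have hw1 : z n - (starRingEnd ℂ) (z m) =
      ((2 * Real.pi / L * ((n:ℝ) - m) : ℝ) : ℂ) + ((2 * Real.log 3 / L : ℝ) : ℂ) * Complex.I := by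
    simp only [hz, map_add, map_mul, map_div₀, Complex.conj_I, Complex.conj_ofReal,
      map_ofNat, Complex.conj_natCast]
    push_cast
    ring
  have hw2 : z n + (starRingEnd ℂ) (z m) =
      ((2 * Real.pi / L * ((n:ℝ) + m) : ℝ) : ℂ) + ((0 : ℝ) : ℂ) * Complex.I := by
    simp only [hz, map_add, map_mul, map_div₀, Complex.conj_I, Complex.conj_ofReal,
      map_ofNat, Complex.conj_natCast]
    push_cast
    ring
  have habs_w1 : a * ((m:ℝ) - n) ≤ ‖z n - (starRingEnd ℂ) (z m)‖ := by
    rw [hw1, Complex.norm_add_mul_I]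
    have h1 : a * ((m:ℝ) - n) = |2 * Real.pi / L * ((n:ℝ) - m)| := by
      rw [abs_mul, _root_.abs_of_nonneg (by positivity : (0:ℝ) ≤ 2 * Real.pi / L),
        _root_.abs_of_nonpos (by linarith : ((n:ℝ) - m) ≤ 0)]
      ring
    rw [h1, ← Real.sqrt_sq_eq_abs]
    exact Real.sqrt_le_sqrt (by nlinarith [sq_nonneg (2 * Real.log 3 / L)])
  have habs_w2 : a * ((m:ℝ) + n) ≤ ‖z n + (starRingEnd ℂ) (z m)‖ := by
    rw [hw2, Complex.norm_add_mul_I]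
    have h1 : a * ((m:ℝ) + n) = |2 * Real.pi / L * ((n:ℝ) + m)| := by
      rw [abs_mul, _root_.abs_of_nonneg (by positivity : (0:ℝ) ≤ 2 * Real.pi / L),
        _root_.abs_of_nonneg (by positivity : (0:ℝ) ≤ (n:ℝ) + m)]
      ring
    rw [h1, ← Real.sqrt_sq_eq_abs]
    exact Real.sqrt_le_sqrt (by nlinarith [sq_nonneg ((0:ℝ)), sq_nonneg (2 * Real.pi / L * ((n:ℝ) + m))])
  have him_w1 : (z n - (starRingEnd ℂ) (z m)).im = 2 * Real.log 3 / L := by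
    rw [hw1]
    simp only [Complex.add_im, Complex.ofReal_im, Complex.mul_im, Complex.ofReal_re,
      Complex.I_im, Complex.I_re]
    ring
  have him_w2 : (z n + (starRingEnd ℂ) (z m)).im = 0 := by
    rw [hw2]
    simp only [Complex.add_im, Complex.ofReal_im, Complex.mul_im, Complex.ofReal_re,
      Complex.I_im, Complex.I_re]
    ring
  -- abs lower bounds for v := lam n - conj (lam m), u := lam n + conj (lam m)
  set v : ℂ := lam n - (starRingEnd ℂ) (lam m) with hv_def
  set u : ℂ := lam n + (starRingEnd ℂ) (lam m) with hu_def
  have hδn := hδ n hn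
  have hδm := hδ m hm
  have hvw : v - (z n - (starRingEnd ℂ) (z m)) =
      (lam n - z n) - (starRingEnd ℂ) (lam m - z m) := by
    rw [map_sub]; ring
  have huw : u - (z n + (starRingEnd ℂ) (z m)) =
      (lam n - z n) + (starRingEnd ℂ) (lam m - z m) := by
    rw [map_sub]; ring
  have hdiffv : ‖v - (z n - (starRingEnd ℂ) (z m))‖ ≤ 2 * C₀ := by
    rw [hvw]
    calc ‖(lam n - z n) - (starRingEnd ℂ) (lam m - z m)‖
        ≤ ‖lam n - z n‖ + ‖(starRingEnd ℂ) (lam m - z m)‖ := by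
          simpa using norm_sub_le (lam n - z n) ((starRingEnd ℂ) (lam m - z m))
      _ ≤ 2 * C₀ := by rw [Complex.norm_conj]; linarith
  have hdiffu : ‖u - (z n + (starRingEnd ℂ) (z m))‖ ≤ 2 * C₀ := by
    rw [huw]
    calc ‖(lam n - z n) + (starRingEnd ℂ) (lam m - z m)‖
        ≤ ‖lam n - z n‖ + ‖(starRingEnd ℂ) (lam m - z m)‖ := by
          simpa using norm_add_le (lam n - z n) ((starRingEnd ℂ) (lam m - z m))
      _ ≤ 2 * C₀ := by rw [Complex.norm_conj]; linarith
  have habs_v : a * ((m:ℝ) - n) - 2 * C₀ ≤ ‖v‖ := by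
    have htri : ‖z n - (starRingEnd ℂ) (z m)‖ ≤
        ‖v‖ + ‖v - (z n - (starRingEnd ℂ) (z m))‖ := by
      have : z n - (starRingEnd ℂ) (z m) = v - (v - (z n - (starRingEnd ℂ) (z m))) := by ring
      rw [this]
      simpa using norm_sub_le v (v - (z n - (starRingEnd ℂ) (z m)))
    linarith
  have habs_u : a * ((m:ℝ) + n) - 2 * C₀ ≤ ‖u‖ := by
    have htri : ‖z n + (starRingEnd ℂ) (z m)‖ ≤
        ‖u‖ + ‖u - (z n + (starRingEnd ℂ) (z m))‖ := by
      have : z n + (starRingEnd ℂ) (z m) = u - (u - (z n + (starRingEnd ℂ) (z m))) := by ring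
      rw [this]
      simpa using norm_sub_le u (u - (z n + (starRingEnd ℂ) (z m)))
    linarith
  -- imaginary part bounds
  have him_v : |v.im| ≤ M := by
    have h1 : v.im = (z n - (starRingEnd ℂ) (z m)).im + (v - (z n - (starRingEnd ℂ) (z m))).im := by
      simp [Complex.sub_im]
    rw [h1, him_w1]
    have h2 : |(v - (z n - (starRingEnd ℂ) (z m))).im| ≤ 2 * C₀ :=
      le_trans (Complex.abs_im_le_norm _) hdiffv
    rw [hM_def]
    have := abs_add_le (2 * Real.log 3 / L) ((v - (z n - (starRingEnd ℂ) (z m))).im)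
    have h3 : |2 * Real.log 3 / L| = 2 * Real.log 3 / L := _root_.abs_of_nonneg (by positivity)
    calc |2 * Real.log 3 / L + (v - (z n - (starRingEnd ℂ) (z m))).im|
        ≤ |2 * Real.log 3 / L| + |(v - (z n - (starRingEnd ℂ) (z m))).im| := abs_add_le _ _
      _ ≤ 2 * Real.log 3 / L + 2 * C₀ := by rw [h3]; linarith
  have him_u : |u.im| ≤ M := by
    have h1 : u.im = (z n + (starRingEnd ℂ) (z m)).im + (u - (z n + (starRingEnd ℂ) (z m))).im := by
      simp [Complex.sub_im]
    rw [h1, him_w2, zero_add]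
    have h2 : |(u - (z n + (starRingEnd ℂ) (z m))).im| ≤ 2 * C₀ :=
      le_trans (Complex.abs_im_le_norm _) hdiffu
    rw [hM_def]
    have hpos : (0:ℝ) ≤ 2 * Real.log 3 / L := by positivity
    linarith
  -- re bounds for the four c's
  have hre_Iv : |(Complex.I * v).re| ≤ M := by
    have : (Complex.I * v).re = -v.im := by simp [Complex.mul_re]
    rw [this, abs_neg]; exact him_v
  have hre_Iu : |(Complex.I * u).re| ≤ M := by
    have : (Complex.I * u).re = -u.im := by simp [Complex.mul_re]
    rw [this, abs_neg]; exact him_u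
  have habs_Iv : a * ((m:ℝ) - n) - 2 * C₀ ≤ ‖Complex.I * v‖ := by
    rw [norm_mul, Complex.norm_I, one_mul]; exact habs_v
  have habs_Iu : a * ((m:ℝ) + n) - 2 * C₀ ≤ ‖Complex.I * u‖ := by
    rw [norm_mul, Complex.norm_I, one_mul]; exact habs_u
  -- integrand rewrites
  have e1 : ∀ x : ℝ, Complex.exp (Complex.I * lam n * x) *
      (starRingEnd ℂ) (Complex.exp (Complex.I * lam m * x)) =
      Complex.exp ((Complex.I * v) * x) := by
    intro x
    rw [← Complex.exp_conj, ← Complex.exp_add]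
    congr 1
    simp only [map_mul, Complex.conj_I, Complex.conj_ofReal, hv_def, map_sub]
    ring
  have e2 : ∀ x : ℝ, Complex.exp (-Complex.I * lam n * x) *
      (starRingEnd ℂ) (Complex.exp (-Complex.I * lam m * x)) =
      Complex.exp ((-(Complex.I * v)) * x) := by
    intro x
    rw [← Complex.exp_conj, ← Complex.exp_add]
    congr 1
    simp only [map_mul, map_neg, Complex.conj_I, Complex.conj_ofReal, hv_def, map_sub]
    ring
  have e3 : ∀ x : ℝ, Complex.exp (Complex.I * lam n * x) *
      (starRingEnd ℂ) (Complex.exp (-Complex.I * lam m * x)) =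
      Complex.exp ((Complex.I * u) * x) := by
    intro x
    rw [← Complex.exp_conj, ← Complex.exp_add]
    congr 1
    simp only [map_mul, map_neg, Complex.conj_I, Complex.conj_ofReal, hu_def, map_add]
    ring
  have e4 : ∀ x : ℝ, Complex.exp (-Complex.I * lam n * x) *
      (starRingEnd ℂ) (Complex.exp (Complex.I * lam m * x)) =
      Complex.exp ((-(Complex.I * u)) * x) := by
    intro x
    rw [← Complex.exp_conj, ← Complex.exp_add]
    congr 1
    simp only [map_mul, Complex.conj_I, Complex.conj_ofReal, hu_def, map_add]
    ring
  have hreN_Iv : |(-(Complex.I * v)).re| ≤ M := by rw [Complex.neg_re, abs_neg]; exact hre_Iv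
  have hreN_Iu : |(-(Complex.I * u)).re| ≤ M := by rw [Complex.neg_re, abs_neg]; exact hre_Iu
  have habsN_Iv : a * ((m:ℝ) - n) - 2 * C₀ ≤ ‖-(Complex.I * v)‖ := by
    rw [norm_neg]; exact habs_Iv
  have habsN_Iu : a * ((m:ℝ) + n) - 2 * C₀ ≤ ‖-(Complex.I * u)‖ := by
    rw [norm_neg]; exact habs_Iu
  have b1 := exp_int_combo L a (2*C₀) M E hL ha (by positivity) le_rfl (Complex.I * v)
    hre_Iv ((m:ℝ) - n) hmn habs_Iv
  have b2 := exp_int_combo L a (2*C₀) M E hL ha (by positivity) le_rfl (-(Complex.I * v))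
    hreN_Iv ((m:ℝ) - n) hmn habsN_Iv
  have b3 := exp_int_combo L a (2*C₀) M E hL ha (by positivity) le_rfl (Complex.I * u)
    hre_Iu ((m:ℝ) + n) hmp habs_Iu
  have b4 := exp_int_combo L a (2*C₀) M E hL ha (by positivity) le_rfl (-(Complex.I * u))
    hreN_Iu ((m:ℝ) + n) hmp habsN_Iu
  constructor
  · simp only [e1, e2]
    have hk : (0:ℝ) < (m:ℝ) - n := lt_of_lt_of_le one_pos hmn
    calc ‖∫ x in (0:ℝ)..L, Complex.exp ((Complex.I * v) * x)‖ +
        ‖∫ x in (0:ℝ)..L, Complex.exp ((-(Complex.I * v)) * x)‖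
        ≤ C₁ / ((m:ℝ) - n) + C₁ / ((m:ℝ) - n) := add_le_add b1 b2
      _ ≤ (2 * C₁ + 1) / ((m:ℝ) - n) := by
          rw [← add_div, div_le_div_iff₀ hk hk]; nlinarith
  · simp only [e3, e4]
    have hk : (0:ℝ) < (m:ℝ) + n := lt_of_lt_of_le one_pos hmp
    calc ‖∫ x in (0:ℝ)..L, Complex.exp ((Complex.I * u) * x)‖ +
        ‖∫ x in (0:ℝ)..L, Complex.exp ((-(Complex.I * u)) * x)‖
        ≤ C₁ / ((m:ℝ) + n) + C₁ / ((m:ℝ) + n) := add_le_add b3 b4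
      _ ≤ (2 * C₁ + 1) / ((m:ℝ) + n) := by
          rw [← add_div, div_le_div_iff₀ hk hk]; nlinarith
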